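/- Consider any play of the graph game on (G, C, s, R), and define a Boolean assignment σ by setting σ(x_l) = true if the move of the play that traverses the variable component G(x_l) uses the path through c_l and f_l, and σ(x_l) = false if it uses the path through b_l and e_l. Then after the first n moves of the play the current edge set E satisfies, for every l ∈ {1,…,n}: (b_l,e_l) ∈ E if and only if σ(x_l) = true, and (c_l,f_l) ∈ E if and only if σ(x_l) = false. -/
import Mathlib


namespace PhutballQBF

/-- A literal: a variable `xₗ` (`pos l`) or its negation `¬xₗ` (`neg l`). -/
inductive Lit where
  | pos (l : ℕ)
  | neg (l : ℕ)
deriving DecidableEq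

/-- The index of the variable occurring in a literal. -/
def Lit.var : Lit → ℕ
  | .pos l => l
  | .neg l => l

/-- Evaluation of a literal under a Boolean assignment. -/
def Lit.eval (σ : ℕ → Bool) : Lit → Bool
  | .pos l => σ l
  | .neg l => !(σ l)

/-- Well-formedness of the 3CNF `F = F₁ ∧ ⋯ ∧ F_m`: the literal `l_{i,j}` (for
`1 ≤ i ≤ m`, `1 ≤ j ≤ 3`) mentions one of the variables `x₁, …, xₙ`. -/
def LitWF (n m : ℕ) (lit : ℕ → ℕ → Lit) : Prop :=
  ∀ i j, 1 ≤ i → i ≤ m → 1 ≤ j → j ≤ 3 → 1 ≤ (lit i j).var ∧ (lit i j).var ≤ n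

/-- The clause `Fᵢ = (l_{i,1} ∨ l_{i,2} ∨ l_{i,3})` evaluates to true under `σ`. -/
def ClauseTrue (lit : ℕ → ℕ → Lit) (i : ℕ) (σ : ℕ → Bool) : Prop :=
  ∃ j, 1 ≤ j ∧ j ≤ 3 ∧ (lit i j).eval σ = true

/-- The 3CNF formula `F = F₁ ∧ ⋯ ∧ F_m` evaluates to true under `σ`. -/
def FTrue (lit : ℕ → ℕ → Lit) (m : ℕ) (σ : ℕ → Bool) : Prop :=
  ∀ i, 1 ≤ i → i ≤ m → ClauseTrue lit i σ

/-- `QAux P i k σ`: the quantified statement with `k` variables `x_i, …, x_{i+k-1}`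
still to be quantified (existentially when the index is odd, universally when even),
the remaining variables having the values recorded in `σ`. -/
def QAux (P : (ℕ → Bool) → Prop) : ℕ → ℕ → (ℕ → Bool) → Prop
  | _, 0, σ => P σ
  | i, k + 1, σ =>
      if i % 2 = 1 then ∃ b, QAux P (i + 1) k (Function.update σ i b)
      else ∀ b, QAux P (i + 1) k (Function.update σ i b)

/-- Truth of the restricted quantified Boolean formula
`Q = ∃x₁ ∀x₂ ∃x₃ ⋯ ∀xₙ F(x₁, …, xₙ)`. -/
def QTrue (n m : ℕ) (lit : ℕ → ℕ → Lit) : Prop :=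
  QAux (FTrue lit m) 1 n (fun _ => false)

/-- The vertices of the graph `G` built from `Q` (with natural-number indices;
`g 0` is the extra vertex `g₀`). -/
inductive Vtx where
  | a (i : ℕ) | b (i : ℕ) | c (i : ℕ) | d (i : ℕ) | e (i : ℕ) | f (i : ℕ) | g (i : ℕ)
  | x (i : ℕ) | y (i : ℕ) | z (i : ℕ) | w (i : ℕ) (j : ℕ)
deriving DecidableEq

/-- A directed edge. -/
abbrev Edge := Vtx × Vtx

/-- The edge set `E(G)` of the graph `G` constructed from `Q` (with `n` variables and
`m` clauses): the variable components `G(xᵢ)`, the connecting edges `(gᵢ, aᵢ₊₁)` for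
`i = 0, …, n-1`, the edge `(gₙ, x₁)`, and the formula component `G(F)`. -/
def EG (n m : ℕ) : Set Edge :=
  { p | (∃ i, 1 ≤ i ∧ i ≤ n ∧
          (p = (Vtx.a i, Vtx.b i) ∨ p = (Vtx.a i, Vtx.c i) ∨ p = (Vtx.b i, Vtx.e i) ∨
           p = (Vtx.c i, Vtx.f i) ∨ p = (Vtx.e i, Vtx.d i) ∨ p = (Vtx.f i, Vtx.d i) ∨
           p = (Vtx.d i, Vtx.g i))) ∨
        (∃ i, i ≤ n - 1 ∧ p = (Vtx.g i, Vtx.a (i + 1))) ∨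
        p = (Vtx.g n, Vtx.x 1) ∨
        (∃ i, 1 ≤ i ∧ i ≤ m ∧
          (p = (Vtx.x i, Vtx.y i) ∨ p = (Vtx.y i, Vtx.z i) ∨ p = (Vtx.z i, Vtx.w i 1) ∨
           p = (Vtx.w i 1, Vtx.w i 2) ∨ p = (Vtx.w i 2, Vtx.w i 3))) ∨
        (∃ i, 1 ≤ i ∧ i ≤ m - 1 ∧ p = (Vtx.x i, Vtx.x (i + 1))) }

/-- The set `C = {g₀, g₁, …, g_{n-1}} ∪ {z₁, …, z_m}`. -/
def Cset (n m : ℕ) : Set Vtx :=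
  { v | (∃ i, i ≤ n - 1 ∧ v = Vtx.g i) ∨ (∃ i, 1 ≤ i ∧ i ≤ m ∧ v = Vtx.z i) }

/-- The relation `R ⊆ V(G) × E(G)`: `(w_{i,j}, (bₗ, eₗ)) ∈ R` iff `l_{i,j} = xₗ`, and
`(w_{i,j}, (cₗ, fₗ)) ∈ R` iff `l_{i,j} = ¬xₗ`. -/
def Rrel (lit : ℕ → ℕ → Lit) (m : ℕ) : Set (Vtx × Edge) :=
  { p | ∃ i j, 1 ≤ i ∧ i ≤ m ∧ 1 ≤ j ∧ j ≤ 3 ∧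
        ((∃ l, lit i j = Lit.pos l ∧ p = (Vtx.w i j, (Vtx.b l, Vtx.e l))) ∨
         (∃ l, lit i j = Lit.neg l ∧ p = (Vtx.w i j, (Vtx.c l, Vtx.f l)))) }

/-- `Rinv R E = R⁻¹(E)`: the vertices pointing some edge of `E`. -/
def Rinv (R : Set (Vtx × Edge)) (E : Set Edge) : Set Vtx :=
  { v | ∃ e ∈ E, (v, e) ∈ R }

/-- The set of (directed) edges traversed by a path given as its list of vertices. -/
def pathEdges (p : List Vtx) : Set Edge := { e | e ∈ p.zip p.tail }

/-- A legal move of the graph game from active vertex `u ∈ C` with current edge set `E`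
along the directed path `p` (a list of at least two pairwise distinct vertices whose
consecutive pairs are edges of `E`), ending at a vertex `v ∈ C ∪ R⁻¹(E)`, with all
internal vertices of `p` outside `C ∪ R⁻¹(E)`; the resulting edge set `E'` is obtained
by deleting the edges of `p` from `E`. -/
def LegalMoveVia (C : Set Vtx) (R : Set (Vtx × Edge))
    (u : Vtx) (E : Set Edge) (v : Vtx) (E' : Set Edge) (p : List Vtx) : Prop :=
  u ∈ C ∧ v ∈ C ∪ Rinv R E ∧
  2 ≤ p.length ∧ p.Nodup ∧
  p.head? = some u ∧ p.getLast? = some v ∧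
  List.Chain' (fun a b => (a, b) ∈ E) p ∧
  (∀ w ∈ (p.drop 1).dropLast, w ∉ C ∪ Rinv R E) ∧
  E' = E \ pathEdges p

/-- A legal move from `(u, E)` to `(v, E')` (along some path). -/
def LegalMove (C : Set Vtx) (R : Set (Vtx × Edge))
    (u : Vtx) (E : Set Edge) (v : Vtx) (E' : Set Edge) : Prop :=
  ∃ p, LegalMoveVia C R u E v E' p

/-- `MoverWins C R true u E` says that the player to move at the position with active
vertex `u` and current edge set `E` has a winning strategy; `MoverWins C R false u E`
says that the player to move loses whatever he does (in particular, if he has no legal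
move he loses immediately; a move to a vertex of `R⁻¹(E)` wins the game for the mover). -/
inductive MoverWins (C : Set Vtx) (R : Set (Vtx × Edge)) : Bool → Vtx → Set Edge → Prop
  | winsNow {u E v E'} : LegalMove C R u E v E' → v ∈ Rinv R E →
      MoverWins C R true u E
  | winsLater {u E v E'} : LegalMove C R u E v E' → MoverWins C R false v E' →
      MoverWins C R true u E
  | loses {u E} :
      (∀ v E', LegalMove C R u E v E' → v ∉ Rinv R E) →
      (∀ v E', LegalMove C R u E v E' → MoverWins C R true v E') →
      MoverWins C R false u E

/-- The two players of the graph game. -/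
inductive Player where
  | ex | fa
deriving DecidableEq

/-- The opponent of a player. -/
def Player.other : Player → Player
  | .ex => .fa
  | .fa => .ex

/-- A (maximal) play of the graph game on `(G, C, s, R)` starting from active vertex `s`
and edge set `E0`, with the ∃-player moving first.  `act k` and `edg k` are the active
vertex and edge set after `k` moves, `turn k` is the player who makes the `(k+1)`-st
move, and `len` is the total number of moves.  The play stops either because its last
move reached a vertex of `R⁻¹(E)` (the mover wins) or because the player to move has no
legal move (he loses); before that, no move may end in `R⁻¹(E)` without stopping. -/
structure Play (C : Set Vtx) (R : Set (Vtx × Edge)) (s : Vtx) (E0 : Set Edge) where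
  len : ℕ
  act : ℕ → Vtx
  edg : ℕ → Set Edge
  turn : ℕ → Player
  init_act : act 0 = s
  init_edg : edg 0 = E0
  init_turn : turn 0 = Player.ex
  turn_alt : ∀ k, turn (k + 1) = (turn k).other
  step : ∀ k, k < len → LegalMove C R (act k) (edg k) (act (k + 1)) (edg (k + 1))
  not_over : ∀ k, k + 1 < len → act (k + 1) ∉ Rinv R (edg k)
  maximal : (0 < len ∧ act len ∈ Rinv R (edg (len - 1))) ∨
            (∀ v E', ¬ LegalMove C R (act len) (edg len) v E')


section Aux

lemma mem_zip_tail {α : Type} {p : List α} {x y : α} (h : (x,y) ∈ p.zip p.tail) :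
    ∃ i, ∃ h : i + 1 < p.length, p[i] = x ∧ p[i+1] = y := by
  obtain ⟨i, hi, hget⟩ := List.mem_iff_getElem.mp h
  rw [List.length_zip, List.length_tail] at hi
  have hi1 : i + 1 < p.length := by omega
  refine ⟨i, hi1, ?_⟩
  rw [List.getElem_zip] at hget
  refine ⟨congrArg Prod.fst hget, ?_⟩
  have h2 := congrArg Prod.snd hget
  simpa [List.getElem_tail] using h2

lemma mem_internal {α : Type} {p : List α} {j : ℕ} (h1 : 0 < j) (h2 : j + 1 < p.length) :
    p[j]'(by omega) ∈ (p.drop 1).dropLast := by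
  have hlen : (p.drop 1).dropLast.length = p.length - 2 := by
    simp [List.length_dropLast, List.length_drop]
    omega
  have hj : j - 1 < (p.drop 1).dropLast.length := by omega
  have heq : (p.drop 1).dropLast[j-1]'hj = p[j]'(by omega) := by
    rw [List.getElem_dropLast, List.getElem_drop]
    congr 1
    omega
  rw [← heq]
  exact List.getElem_mem _

lemma head_getElem {α : Type} {p : List α} {u : α} (h : p.head? = some u) (hl : 0 < p.length) :
    p[0] = u := by
  cases p with
  | nil => simp at hl
  | cons a t => simpa using h

lemma pred_b {n m l : ℕ} {q : Vtx} (h : (q, Vtx.b l) ∈ EG n m) : q = Vtx.a l := by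
  simp only [EG, Set.mem_setOf_eq, Prod.mk.injEq] at h
  rcases h with ⟨i,_,_,h|h|h|h|h|h|h⟩|⟨i,_,h⟩|h|⟨i,_,_,h|h|h|h|h⟩|⟨i,_,_,h⟩ <;>
    simp_all

lemma pred_c {n m l : ℕ} {q : Vtx} (h : (q, Vtx.c l) ∈ EG n m) : q = Vtx.a l := by
  simp only [EG, Set.mem_setOf_eq, Prod.mk.injEq] at h
  rcases h with ⟨i,_,_,h|h|h|h|h|h|h⟩|⟨i,_,h⟩|h|⟨i,_,_,h|h|h|h|h⟩|⟨i,_,_,h⟩ <;>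
    simp_all

lemma pred_a {n m l : ℕ} {q : Vtx} (h : (q, Vtx.a l) ∈ EG n m) :
    q = Vtx.g (l - 1) := by
  simp only [EG, Set.mem_setOf_eq, Prod.mk.injEq] at h
  rcases h with ⟨i,_,_,h|h|h|h|h|h|h⟩|⟨i,_,h⟩|h|⟨i,_,_,h|h|h|h|h⟩|⟨i,_,_,h⟩ <;>
    simp_all

lemma b_not_C {n m l : ℕ} : Vtx.b l ∉ Cset n m := by simp [Cset]
lemma c_not_C {n m l : ℕ} : Vtx.c l ∉ Cset n m := by simp [Cset]
lemma a_not_C {n m l : ℕ} : Vtx.a l ∉ Cset n m := by simp [Cset]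
lemma g_mem_C {n m l : ℕ} (h : l ≤ n - 1) : Vtx.g l ∈ Cset n m := Or.inl ⟨l, h, rfl⟩

/-- Key structural lemma: a legal move whose path visits a vertex `yv` whose only
`EG`-predecessor is `aₗ` (and `yv ∉ C`) must start at `g (l-1)`. -/
lemma key_move {n m l : ℕ} (hl1 : 1 ≤ l) (hln : l ≤ n)
    {R : Set (Vtx × Edge)} {u : Vtx} {E : Set Edge} {v : Vtx} {E' : Set Edge} {p : List Vtx}
    (hmv : LegalMoveVia (Cset n m) R u E v E' p) (hE : E ⊆ EG n m)
    {yv : Vtx} (hy : ∀ q : Vtx, (q, yv) ∈ EG n m → q = Vtx.a l) (hyC : yv ∉ Cset n m)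
    (hmem : ∃ i, ∃ h : i < p.length, p[i] = yv) : u = Vtx.g (l - 1) := by
  obtain ⟨huC, hvC, hplen, hnd, hhead, hlast, hchain, hint, hE'⟩ := hmv
  obtain ⟨i, hi, hpi⟩ := hmem
  have hchain' : ∀ (i : ℕ) (h : i + 1 < p.length), (p[i]'(by omega), p[i+1]'h) ∈ E := by
    intro i h
    have := List.isChain_iff_getElem.mp hchain i (by omega)
    simpa using this
  have h0 : p[0]'(by omega) = u := head_getElem hhead (by omega)
  match i, hi, hpi with
  | 0, hi, hpi =>
    exact absurd (hpi ▸ h0 ▸ huC) hyC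
  | (i'+1), hi, hpi =>
    have hstep1 : (p[i']'(by omega), p[i'+1]'hi) ∈ E := hchain' i' hi
    have hpa : p[i']'(by omega) = Vtx.a l := by
      rw [hpi] at hstep1
      exact hy _ (hE hstep1)
    match i', hi, hpa with
    | 0, hi, hpa =>
      exact absurd (hpa ▸ h0 ▸ huC) a_not_C
    | (j+1), hi, hpa =>
      have hstep2 : (p[j]'(by omega), p[j+1]'(by omega)) ∈ E := hchain' j (by omega)
      have hpg : p[j]'(by omega) = Vtx.g (l - 1) := by
        rw [hpa] at hstep2
        exact pred_a (hE hstep2)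
      match j, hi, hpg with
      | 0, hi, hpg => exact hpg ▸ h0.symm
      | (j'+1), hi, hpg =>
        exfalso
        have hin : p[j'+1]'(by omega) ∈ (p.drop 1).dropLast :=
          mem_internal (by omega) (by omega)
        have hnot := hint _ hin
        rw [hpg] at hnot
        exact hnot (Or.inl (g_mem_C (by omega)))

lemma edg_mono {C : Set Vtx} {R : Set (Vtx × Edge)} {s : Vtx} {E0 : Set Edge}
    (P : Play C R s E0) : ∀ {j k : ℕ}, j ≤ k → k ≤ P.len → P.edg k ⊆ P.edg j := by
  intro j k hjk
  induction hjk with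
  | refl => intro _; exact subset_rfl
  | @step k hk ih =>
    intro hk1
    obtain ⟨p, hmv⟩ := P.step k (by omega)
    have hE' := hmv.2.2.2.2.2.2.2.2
    refine subset_trans ?_ (ih (by omega))
    rw [hE']
    exact Set.diff_subset

end Aux

/-- Consider any play of the graph game on `(G, C, s, R)` (which has at
least `n` moves, the first `n` of which traverse the variable components in order), and
define a Boolean assignment `σ` by setting `σ(xₗ) = true` if the `l`-th move — the move
of the play that traverses the variable component `G(xₗ)` — uses the path through `cₗ`
and `fₗ` (i.e., it deletes the edge `(cₗ, fₗ)`), and `σ(xₗ) = false` if it uses the path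
through `bₗ` and `eₗ` (i.e., it deletes the edge `(bₗ, eₗ)`).  Then after the first `n`
moves of the play the current edge set `E = P.edg n` satisfies, for every
`l ∈ {1, …, n}`: `(bₗ, eₗ) ∈ E` if and only if `σ(xₗ) = true`, and `(cₗ, fₗ) ∈ E` if and
only if `σ(xₗ) = false`. -/
theorem edge_set_after_first_n_moves
    (n m : ℕ) (hn : Even n) (hn2 : 2 ≤ n) (hm : 1 ≤ m)
    (lit : ℕ → ℕ → Lit) (hwf : LitWF n m lit)
    (P : Play (Cset n m) (Rrel lit m) (Vtx.g 0) (EG n m))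
    (hlen : n ≤ P.len)
    (σ : ℕ → Bool)
    (hσ : ∀ l, 1 ≤ l → l ≤ n →
      (σ l = true ↔ (Vtx.c l, Vtx.f l) ∈ P.edg (l - 1) \ P.edg l) ∧
      (σ l = false ↔ (Vtx.b l, Vtx.e l) ∈ P.edg (l - 1) \ P.edg l)) :
    ∀ l, 1 ≤ l → l ≤ n →
      ((Vtx.b l, Vtx.e l) ∈ P.edg n ↔ σ l = true) ∧
      ((Vtx.c l, Vtx.f l) ∈ P.edg n ↔ σ l = false) := by
  have hEG : ∀ k, k ≤ n → P.edg k ⊆ EG n m := by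
    intro k hk
    have := edg_mono P (Nat.zero_le k) (le_trans hk hlen)
    rwa [P.init_edg] at this
  -- The move `l` starts at `g (l-1)`.
  have hact : ∀ l, 1 ≤ l → l ≤ n → P.act (l-1) = Vtx.g (l-1) := by
    intro l hl1 hln
    obtain ⟨hσ1, hσ2⟩ := hσ l hl1 hln
    obtain ⟨p, hmv⟩ := P.step (l-1) (by omega)
    have hll : l - 1 + 1 = l := by omega
    rw [hll] at hmv
    have hE' := hmv.2.2.2.2.2.2.2.2
    have hEsub : P.edg (l-1) ⊆ EG n m := hEG (l-1) (by omega)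
    cases hb : σ l with
    | true =>
      obtain ⟨hin, hout⟩ := hσ1.mp hb
      have hpath : (Vtx.c l, Vtx.f l) ∈ pathEdges p := by
        by_contra hc
        exact hout (hE' ▸ ⟨hin, hc⟩)
      obtain ⟨i, hi, hpi, -⟩ := mem_zip_tail hpath
      exact key_move hl1 hln hmv hEsub (fun q => pred_c) c_not_C ⟨i, by omega, hpi⟩
    | false =>
      obtain ⟨hin, hout⟩ := hσ2.mp hb
      have hpath : (Vtx.b l, Vtx.e l) ∈ pathEdges p := by
        by_contra hc
        exact hout (hE' ▸ ⟨hin, hc⟩)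
      obtain ⟨i, hi, hpi, -⟩ := mem_zip_tail hpath
      exact key_move hl1 hln hmv hEsub (fun q => pred_b) b_not_C ⟨i, by omega, hpi⟩
  -- Survival: an edge whose only possible deleting move is move `l`, and which move `l`
  -- does not delete, is still present after `n` moves.
  have hsur : ∀ (yv zv : Vtx) (l : ℕ), 1 ≤ l → l ≤ n →
      (∀ q : Vtx, (q, yv) ∈ EG n m → q = Vtx.a l) → (yv ∉ Cset n m) →
      ((yv, zv) ∈ EG n m) → ((yv, zv) ∉ P.edg (l-1) \ P.edg l) →
      ∀ k, k ≤ n → (yv, zv) ∈ P.edg k := by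
    intro yv zv l hl1 hln hy hyC h0 hnd k
    induction k with
    | zero => intro _; rw [P.init_edg]; exact h0
    | succ k ih =>
      intro hk1
      have hmem := ih (by omega)
      obtain ⟨p, hmv⟩ := P.step k (by omega)
      have hE' := hmv.2.2.2.2.2.2.2.2
      rw [hE']
      refine ⟨hmem, ?_⟩
      intro hpath
      obtain ⟨i, hi, hpi, -⟩ := mem_zip_tail hpath
      have hu := key_move hl1 hln hmv (hEG k (by omega)) hy hyC ⟨i, by omega, hpi⟩
      have hak : P.act (k+1-1) = Vtx.g (k+1-1) := hact (k+1) (by omega) hk1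
      simp only [Nat.add_sub_cancel] at hak
      rw [hak] at hu
      have hkl : k = l - 1 := by injection hu
      apply hnd
      refine ⟨hkl ▸ hmem, ?_⟩
      have hlk : l = k + 1 := by omega
      rw [hlk, hE']
      intro hmem2
      exact hmem2.2 hpath
  intro l hl1 hln
  obtain ⟨hσ1, hσ2⟩ := hσ l hl1 hln
  have hbEG : (Vtx.b l, Vtx.e l) ∈ EG n m :=
    Or.inl ⟨l, hl1, hln, Or.inr (Or.inr (Or.inl rfl))⟩
  have hcEG : (Vtx.c l, Vtx.f l) ∈ EG n m :=
    Or.inl ⟨l, hl1, hln, Or.inr (Or.inr (Or.inr (Or.inl rfl)))⟩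
  have hmono : P.edg n ⊆ P.edg l := edg_mono P hln hlen
  cases hb : σ l with
  | true =>
    obtain ⟨hin, hout⟩ := hσ1.mp hb
    have hbnot : (Vtx.b l, Vtx.e l) ∉ P.edg (l-1) \ P.edg l := by
      intro h
      have hf := hσ2.mpr h
      rw [hb] at hf
      simp at hf
    refine ⟨⟨fun _ => rfl,
      fun _ => hsur _ _ l hl1 hln (fun q => pred_b) b_not_C hbEG hbnot n le_rfl⟩, ?_⟩
    constructor
    · intro hcn
      exact absurd (hmono hcn) hout
    · intro hf
      simp at hf
  | false =>
    obtain ⟨hin, hout⟩ := hσ2.mp hb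
    have hcnot : (Vtx.c l, Vtx.f l) ∉ P.edg (l-1) \ P.edg l := by
      intro h
      have hf := hσ1.mpr h
      rw [hb] at hf
      simp at hf
    refine ⟨?_, ⟨fun _ => rfl,
      fun _ => hsur _ _ l hl1 hln (fun q => pred_c) c_not_C hcEG hcnot n le_rfl⟩⟩
    constructor
    · intro hbn
      exact absurd (hmono hbn) hout
    · intro hf
      simp at hf

end PhutballQBF
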